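/- For any graph G with no isolated vertex, ∂_{2p}(G) ≤ n(G) - γ_t(G), where γ_t(G) is the total domination number; furthermore equality holds if and only if G has a dominating set which is a 2-packing and γ_t(G) = 2γ(G). -/

import Mathlib

open Finset

variable {V : Type*}

/-- `S` is a 2-packing: closed neighbourhoods of distinct vertices of `S` are disjoint. -/
def IsPacking2 (G : SimpleGraph V) (S : Finset V) : Prop :=
  (S : Set V).Pairwise fun u v =>
    Disjoint (G.neighborSet u ∪ {u}) (G.neighborSet v ∪ {v})

/-- The external neighbourhood of `S`: vertices outside `S` with a neighbour in `S`. -/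
def extN (G : SimpleGraph V) [Fintype V] [DecidableEq V] [DecidableRel G.Adj]
    (S : Finset V) : Finset V :=
  Finset.univ.filter fun v => v ∉ S ∧ ∃ u ∈ S, G.Adj u v

/-- The differential of a set `S`: `|N_e(S)| - |S|`. -/
def diffSet (G : SimpleGraph V) [Fintype V] [DecidableEq V] [DecidableRel G.Adj]
    (S : Finset V) : ℤ :=
  ((extN G S).card : ℤ) - S.card

/-- The 2-packing differential of `G`. -/
noncomputable def pdiff2 (G : SimpleGraph V) [Fintype V] [DecidableEq V]
    [DecidableRel G.Adj] : ℤ :=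
  sSup {d : ℤ | ∃ S : Finset V, IsPacking2 G S ∧ d = diffSet G S}

/-- The packing number of `G`: maximum cardinality of a 2-packing. -/
noncomputable def packNum (G : SimpleGraph V) [Fintype V] : ℕ :=
  sSup {n : ℕ | ∃ S : Finset V, IsPacking2 G S ∧ n = S.card}

/-- `G` has no isolated vertex. -/
def NoIsolated (G : SimpleGraph V) : Prop := ∀ v : V, ∃ u, G.Adj v u

/-- `S` is a dominating set of `G`. -/
def IsDom (G : SimpleGraph V) (S : Finset V) : Prop :=
  ∀ v, v ∉ S → ∃ u ∈ S, G.Adj u v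

/-- `S` is a total dominating set of `G`. -/
def IsTotalDom (G : SimpleGraph V) (S : Finset V) : Prop :=
  ∀ v : V, ∃ u ∈ S, G.Adj u v

/-- The total domination number of `G`. -/
noncomputable def totalDomNum (G : SimpleGraph V) [Fintype V] : ℕ :=
  sInf {n : ℕ | ∃ S : Finset V, IsTotalDom G S ∧ n = S.card}

/-- The domination number of `G`. -/
noncomputable def domNum (G : SimpleGraph V) [Fintype V] : ℕ :=
  sInf {n : ℕ | ∃ S : Finset V, IsDom G S ∧ n = S.card}

set_option linter.unusedSectionVars false
section Helpers
variable [Fintype V] [DecidableEq V] {G : SimpleGraph V} [DecidableRel G.Adj]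

lemma mem_extN {S : Finset V} {v : V} :
    v ∈ extN G S ↔ v ∉ S ∧ ∃ u ∈ S, G.Adj u v := by
  simp [extN]

lemma packing_empty : IsPacking2 G (∅ : Finset V) := by
  simp [IsPacking2]

lemma not_adj_of_packing {S : Finset V} (hS : IsPacking2 G S) {u v : V}
    (hu : u ∈ S) (hv : v ∈ S) (hadj : G.Adj u v) : False := by
  have hd := hS (by exact_mod_cast hu) (by exact_mod_cast hv) hadj.ne
  exact Set.disjoint_left.1 hd (Or.inl hadj) (Or.inr rfl)

lemma nbhd_sub {S : Finset V} {u w : V} (hu : u ∈ S) (hadj : G.Adj u w) :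
    w ∈ S ∪ extN G S := by
  by_cases hw : w ∈ S
  · exact mem_union_left _ hw
  · exact mem_union_right _ (mem_extN.2 ⟨hw, u, hu, hadj⟩)

lemma packing_card_le_dom {S D : Finset V} (hS : IsPacking2 G S) (hD : IsDom G D) :
    S.card ≤ D.card := by
  classical
  have hpick : ∀ s, s ∈ S → ∃ d, d ∈ D ∧ d ∈ G.neighborSet s ∪ {s} := by
    intro s _
    by_cases hsd : s ∈ D
    · exact ⟨s, hsd, Or.inr rfl⟩
    · obtain ⟨u, hu, hadj⟩ := hD s hsd
      exact ⟨u, hu, Or.inl hadj.symm⟩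
  choose! f hfD hfN using hpick
  apply card_le_card_of_injOn f (fun s hs => hfD s hs)
  intro s₁ h₁ s₂ h₂ hf
  by_contra hne
  have hd := hS h₁ h₂ hne
  exact Set.disjoint_left.1 hd (hfN s₁ h₁) (hf ▸ hfN s₂ h₂)

lemma tdn_le (h : NoIsolated G) (S : Finset V) (hS : IsPacking2 G S) :
    (totalDomNum G : ℤ) + diffSet G S ≤ (Fintype.card V : ℤ) := by
  classical
  choose nbr hnbr using h
  set A : Finset V := univ \ (S ∪ extN G S) with hA
  set T : Finset V := S ∪ (S ∪ A).image nbr with hT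
  have hTdom : IsTotalDom G T := by
    intro v
    by_cases hv : v ∈ S
    · exact ⟨nbr v, mem_union_right _ (mem_image_of_mem _ (mem_union_left _ hv)),
        (hnbr v).symm⟩
    by_cases hv2 : v ∈ extN G S
    · obtain ⟨_, u, hu, hadj⟩ := mem_extN.1 hv2
      exact ⟨u, mem_union_left _ hu, hadj⟩
    · have hvA : v ∈ A := by simp [hA, hv, hv2]
      exact ⟨nbr v, mem_union_right _ (mem_image_of_mem _ (mem_union_right _ hvA)),
        (hnbr v).symm⟩
  have h1 : totalDomNum G ≤ T.card := Nat.sInf_le ⟨T, hTdom, rfl⟩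
  have h2 : T.card ≤ S.card + (S.card + A.card) :=
    le_trans (card_union_le _ _)
      (by gcongr; exact le_trans card_image_le (card_union_le _ _))
  have hdisj : Disjoint S (extN G S) := by
    rw [disjoint_left]; intro x hx hx2; exact (mem_extN.1 hx2).1 hx
  have h3 : A.card = Fintype.card V - (S.card + (extN G S).card) := by
    rw [hA, card_sdiff_of_subset (subset_univ _), card_union_of_disjoint hdisj, card_univ]
  have h4 : S.card + (extN G S).card ≤ Fintype.card V := by
    rw [← card_union_of_disjoint hdisj, ← card_univ]
    exact card_le_card (subset_univ _)
  have hds : diffSet G S = ((extN G S).card : ℤ) - S.card := rfl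
  rw [hds]
  omega


lemma pdiff_set_ne :
    {d : ℤ | ∃ S : Finset V, IsPacking2 G S ∧ d = diffSet G S}.Nonempty :=
  ⟨_, ∅, packing_empty, rfl⟩

lemma pdiff_bdd (h : NoIsolated G) :
    ∀ d ∈ {d : ℤ | ∃ S : Finset V, IsPacking2 G S ∧ d = diffSet G S},
      d ≤ (Fintype.card V : ℤ) - totalDomNum G := by
  rintro d ⟨S, hS, rfl⟩
  linarith [tdn_le h S hS]

lemma part1 (h : NoIsolated G) :
    pdiff2 G ≤ (Fintype.card V : ℤ) - totalDomNum G :=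
  csSup_le pdiff_set_ne (pdiff_bdd h)

lemma dom_packing_card {S : Finset V} (hS : IsPacking2 G S) (hdom : IsDom G S) :
    S.card = domNum G := by
  apply le_antisymm
  · have hne : {n : ℕ | ∃ D : Finset V, IsDom G D ∧ n = D.card}.Nonempty :=
      ⟨_, univ, fun v hv => absurd (mem_univ v) hv, rfl⟩
    obtain ⟨D, hD, hDc⟩ := Nat.sInf_mem hne
    rw [domNum, hDc]
    exact packing_card_le_dom hS hD
  · exact Nat.sInf_le ⟨S, hdom, rfl⟩

lemma forward (h : NoIsolated G)
    (heq : pdiff2 G = (Fintype.card V : ℤ) - totalDomNum G) :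
    ∃ S : Finset V, IsPacking2 G S ∧ IsDom G S ∧
      (totalDomNum G : ℤ) = 2 * S.card := by
  classical
  have hfin : {d : ℤ | ∃ S : Finset V, IsPacking2 G S ∧ d = diffSet G S}.Finite :=
    Set.Finite.subset (Set.finite_range (diffSet G))
      (by rintro d ⟨S, -, rfl⟩; exact ⟨S, rfl⟩)
  have hmem : ∃ S : Finset V, IsPacking2 G S ∧ pdiff2 G = diffSet G S :=
    Set.Nonempty.csSup_mem pdiff_set_ne hfin
  have hbdd : BddAbove {d : ℤ | ∃ S : Finset V, IsPacking2 G S ∧ d = diffSet G S} :=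
    ⟨(Fintype.card V : ℤ) - totalDomNum G, pdiff_bdd h⟩
  set P : Finset (Finset V) :=
    univ.filter (fun S => IsPacking2 G S ∧ pdiff2 G = diffSet G S) with hP
  obtain ⟨S₀, h1, h2⟩ := hmem
  have hPne : P.Nonempty := ⟨S₀, by simp [hP, h1, h2]⟩
  obtain ⟨S, hSP, hmax⟩ := exists_max_image P (fun S => S.card) hPne
  rw [hP, mem_filter] at hSP
  obtain ⟨-, hS, hdS⟩ := hSP
  set A : Finset V := univ \ (S ∪ extN G S) with hA
  have hdisj : Disjoint S (extN G S) := by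
    rw [disjoint_left]; intro x hx hx2; exact (mem_extN.1 hx2).1 hx
  have h3 : A.card = Fintype.card V - (S.card + (extN G S).card) := by
    rw [hA, card_sdiff_of_subset (subset_univ _), card_union_of_disjoint hdisj, card_univ]
  have h4 : S.card + (extN G S).card ≤ Fintype.card V := by
    rw [← card_union_of_disjoint hdisj, ← card_univ]
    exact card_le_card (subset_univ _)
  have hds : diffSet G S = ((extN G S).card : ℤ) - S.card := rfl
  have hγt : (totalDomNum G : ℤ) = 2 * S.card + A.card := by
    rw [hds] at hdS; rw [hdS] at heq; omega
  have hAe : A = ∅ := by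
    by_contra hAne
    rw [← ne_eq, ← nonempty_iff_ne_empty] at hAne
    obtain ⟨a₀, ha₀⟩ := hAne
    by_cases hall : ∀ a ∈ A, ∃ b ∈ extN G S, G.Adj a b
    · choose! hfun hfmem hfadj using hall
      obtain ⟨-, v₀, hv₀S, hv₀adj⟩ := mem_extN.1 (hfmem a₀ ha₀)
      choose nbr hnbr using h
      set T : Finset V := S ∪ ((S.erase v₀).image nbr ∪ A.image hfun) with hT
      have hTdom : IsTotalDom G T := by
        intro v
        by_cases hv : v ∈ S
        · by_cases hvv : v = v₀
          · exact ⟨hfun a₀,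
              mem_union_right _ (mem_union_right _ (mem_image_of_mem _ ha₀)),
              by rw [hvv]; exact hv₀adj.symm⟩
          · exact ⟨nbr v,
              mem_union_right _ (mem_union_left _
                (mem_image_of_mem _ (mem_erase.2 ⟨hvv, hv⟩))),
              (hnbr v).symm⟩
        · by_cases hv2 : v ∈ extN G S
          · obtain ⟨-, u, hu, hadj⟩ := mem_extN.1 hv2
            exact ⟨u, mem_union_left _ hu, hadj⟩
          · have hvA : v ∈ A := by simp [hA, hv, hv2]
            exact ⟨hfun v,
              mem_union_right _ (mem_union_right _ (mem_image_of_mem _ hvA)),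
              (hfadj v hvA).symm⟩
      have e1 : ((S.erase v₀).image nbr).card ≤ S.card - 1 :=
        le_trans card_image_le (le_of_eq (card_erase_of_mem hv₀S))
      have e2 : (A.image hfun).card ≤ A.card := card_image_le
      have hc : T.card ≤ S.card + ((S.card - 1) + A.card) := by
        calc T.card ≤ S.card + ((S.erase v₀).image nbr ∪ A.image hfun).card :=
              card_union_le _ _
          _ ≤ S.card + (((S.erase v₀).image nbr).card + (A.image hfun).card) :=
              Nat.add_le_add_left (card_union_le _ _) _
          _ ≤ S.card + ((S.card - 1) + A.card) := by omega
      have hTm : totalDomNum G ≤ T.card := Nat.sInf_le ⟨T, hTdom, rfl⟩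
      have hS1 : 1 ≤ S.card := card_pos.2 ⟨v₀, hv₀S⟩
      omega
    · push_neg at hall
      obtain ⟨a, haA, hna⟩ := hall
      have haS : a ∉ S := fun hc => (mem_sdiff.1 haA).2 (mem_union_left _ hc)
      have haE : a ∉ extN G S := fun hc => (mem_sdiff.1 haA).2 (mem_union_right _ hc)
      have hnbrA : ∀ b, G.Adj a b → b ∈ A := by
        intro b hab
        have hbS : b ∉ S := by
          intro hbS
          exact haE (mem_extN.2 ⟨haS, b, hbS, hab.symm⟩)
        have hbE : b ∉ extN G S := fun hc => hna b hc hab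
        simp [hA, hbS, hbE]
      have hsymm : Symmetric (fun u v : V =>
          Disjoint (G.neighborSet u ∪ {u}) (G.neighborSet v ∪ {v})) :=
        fun x y hxy => hxy.symm
      have hS' : IsPacking2 G (insert a S) := by
        rw [IsPacking2, coe_insert, (haveI : Std.Symm (fun u v : V =>
            Disjoint (G.neighborSet u ∪ {u}) (G.neighborSet v ∪ {v})) := ⟨fun _ _ h => hsymm h⟩;
          Set.pairwise_insert_of_symm)]
        refine ⟨hS, fun b hb _ => ?_⟩
        have hbS : b ∈ S := hb
        rw [Set.disjoint_left]
        rintro x (hx | hx) hx2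
        · have hxA : x ∈ A := hnbrA x hx
          have hxSE : x ∈ S ∪ extN G S := by
            rcases hx2 with hx2 | hx2
            · exact nbhd_sub hbS hx2
            · exact mem_union_left _ (hx2 ▸ hbS)
          exact (mem_sdiff.1 hxA).2 hxSE
        · rw [Set.mem_singleton_iff] at hx
          subst hx
          rcases hx2 with hx2 | hx2
          · exact haE (mem_extN.2 ⟨haS, b, hbS, hx2⟩)
          · rw [Set.mem_singleton_iff] at hx2
            exact haS (hx2 ▸ hbS)
      have hext : extN G (insert a S) = extN G S ∪ G.neighborFinset a := by
        ext v
        simp only [mem_union, mem_extN, SimpleGraph.mem_neighborFinset, mem_insert]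
        constructor
        · rintro ⟨hvIn, u, (rfl | huS), hadj⟩
          · exact Or.inr hadj
          · exact Or.inl ⟨fun hc => hvIn (Or.inr hc), u, huS, hadj⟩
        · rintro (⟨hvS, u, huS, hadj⟩ | hadj)
          · have hva : v ≠ a := by
              rintro rfl
              exact haE (mem_extN.2 ⟨hvS, u, huS, hadj⟩)
            exact ⟨by rintro (rfl | hc); exact hva rfl; exact hvS hc, u, Or.inr huS, hadj⟩
          · have hvA : v ∈ A := hnbrA v hadj
            have hvS : v ∉ S := fun hc => (mem_sdiff.1 hvA).2 (mem_union_left _ hc)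
            have hva : v ≠ a := G.ne_of_adj hadj.symm
            exact ⟨by rintro (rfl | hc); exact hva rfl; exact hvS hc, a, Or.inl rfl, hadj⟩
      have hdisj2 : Disjoint (extN G S) (G.neighborFinset a) := by
        rw [disjoint_right]
        intro x hx
        have hxA := hnbrA x ((G.mem_neighborFinset a x).1 hx)
        exact fun hc => (mem_sdiff.1 hxA).2 (mem_union_right _ hc)
      have hcard2 : (extN G (insert a S)).card
          = (extN G S).card + (G.neighborFinset a).card := by
        rw [hext, card_union_of_disjoint hdisj2]
      have hdeg : 1 ≤ (G.neighborFinset a).card := by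
        obtain ⟨u, hu⟩ := h a
        exact card_pos.2 ⟨u, (G.mem_neighborFinset a u).2 hu⟩
      have hd' : diffSet G (insert a S)
          = diffSet G S + (G.neighborFinset a).card - 1 := by
        unfold diffSet
        rw [hcard2, card_insert_of_notMem haS]
        push_cast
        ring
      have hle : diffSet G (insert a S) ≤ pdiff2 G :=
        le_csSup hbdd ⟨insert a S, hS', rfl⟩
      have hPd : pdiff2 G = diffSet G (insert a S) := by omega
      have hcmax := hmax (insert a S) (by simp [hP, hS', hPd])
      rw [card_insert_of_notMem haS] at hcmax
      omega
  have hdom : IsDom G S := by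
    intro v hv
    have hvE : v ∈ extN G S := by
      by_contra hv2
      have : v ∈ A := by simp [hA, hv, hv2]
      rw [hAe] at this
      exact absurd this (notMem_empty v)
    exact (mem_extN.1 hvE).2
  refine ⟨S, hS, hdom, ?_⟩
  rw [hγt, hAe]
  simp

theorem stmt13 {V : Type*} [Fintype V] [DecidableEq V] (G : SimpleGraph V)
    [DecidableRel G.Adj] (h : NoIsolated G) :
    pdiff2 G ≤ (Fintype.card V : ℤ) - totalDomNum G ∧
      (pdiff2 G = (Fintype.card V : ℤ) - totalDomNum G ↔
        (∃ S : Finset V, IsPacking2 G S ∧ IsDom G S) ∧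
          totalDomNum G = 2 * domNum G) := by
  classical
  refine ⟨part1 h, ?_, ?_⟩
  · intro heq
    obtain ⟨S, hS, hdom, hγt⟩ := forward h heq
    refine ⟨⟨S, hS, hdom⟩, ?_⟩
    have hc := dom_packing_card hS hdom
    rw [← hc]
    exact_mod_cast hγt
  · rintro ⟨⟨S, hS, hdom⟩, hγ⟩
    have hc := dom_packing_card hS hdom
    have hext : extN G S = univ \ S := by
      ext v
      simp only [mem_extN, mem_sdiff, mem_univ, true_and]
      exact ⟨fun hv => hv.1, fun hv => ⟨hv, hdom v hv⟩⟩
    have hcle : S.card ≤ Fintype.card V := by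
      rw [← card_univ]; exact card_le_card (subset_univ _)
    have hdv : diffSet G S = (Fintype.card V : ℤ) - 2 * S.card := by
      unfold diffSet
      rw [hext, card_sdiff_of_subset (subset_univ _), card_univ]
      omega
    have hmem : ((Fintype.card V : ℤ) - 2 * S.card)
        ∈ {d : ℤ | ∃ S : Finset V, IsPacking2 G S ∧ d = diffSet G S} :=
      ⟨S, hS, hdv.symm⟩
    have hle : ((Fintype.card V : ℤ) - 2 * S.card) ≤ pdiff2 G :=
      le_csSup ⟨_, pdiff_bdd h⟩ hmem
    have h2 : (totalDomNum G : ℤ) = 2 * S.card := by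
      rw [hγ, ← hc]; push_cast; ring
    refine le_antisymm (part1 h) ?_
    rw [h2]
    exact hle
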